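/- For all integers n, k, δ ≥ 1 there exists a constant k₁ = k₁(n,k,δ) with the following property. Suppose G is an almost torsion-free group with a finite generating set S of n elements whose Cayley graph X = Γ(G,S) is δ-hyperbolic. Then for every nontrivial element g ∈ G of finite order, the set E(g,k) = {x ∈ X : d(x, gx) ≤ k} has diameter at most k₁ in X. -/

import Mathlib

noncomputable section

namespace KW

open Metric Set Pointwise

variable {X : Type*} [MetricSpace X]

/-- `s` is (the image of) a unit-speed geodesic segment joining `x` to `y`. -/
def IsGeodesicSegment (s : Set X) (x y : X) : Prop :=
  ∃ (b : ℝ) (f : ℝ → X), 0 ≤ b ∧ f 0 = x ∧ f b = y ∧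
    (∀ u ∈ Set.Icc (0 : ℝ) b, ∀ v ∈ Set.Icc (0 : ℝ) b, dist (f u) (f v) = |u - v|) ∧
    s = f '' Set.Icc 0 b

/-- A geodesic metric space. -/
def GeodesicSpace (X : Type*) [MetricSpace X] : Prop :=
  ∀ x y : X, ∃ s : Set X, IsGeodesicSegment s x y

/-- `X` is `δ`-hyperbolic: geodesic, and every geodesic triangle is `δ`-thin. -/
def DeltaHyperbolic (δ : ℝ) (X : Type*) [MetricSpace X] : Prop :=
  GeodesicSpace X ∧
    ∀ (x y z : X) (s₁ s₂ s₃ : Set X),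
      IsGeodesicSegment s₁ x y → IsGeodesicSegment s₂ y z → IsGeodesicSegment s₃ x z →
      ∀ p ∈ s₁, ∃ q ∈ s₂ ∪ s₃, dist p q ≤ δ

/-- `A` is an `ε`-quasiconvex subset of `X`. -/
def Quasiconvex (ε : ℝ) (A : Set X) : Prop :=
  ∀ x ∈ A, ∀ y ∈ A, ∀ s : Set X, IsGeodesicSegment s x y → ∀ p ∈ s, ∃ a ∈ A, dist p a ≤ ε

/-- The Gromov product `(y,z)_x`. -/
def gromov (x y z : X) : ℝ := (dist y x + dist z x - dist y z) / 2

def IsGeodesicRay (γ : ℝ → X) : Prop :=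
  ∀ s t : ℝ, 0 ≤ s → 0 ≤ t → dist (γ s) (γ t) = |s - t|

def IsBiGeodesic (γ : ℝ → X) : Prop :=
  ∀ s t : ℝ, dist (γ s) (γ t) = |s - t|

/-- `A` and `B` are `K`-Hausdorff close. -/
def HClose (K : ℝ) (A B : Set X) : Prop :=
  (∀ a ∈ A, ∃ b ∈ B, dist a b ≤ K) ∧ ∀ b ∈ B, ∃ a ∈ A, dist a b ≤ K

def HausdorffClose (A B : Set X) : Prop := ∃ K : ℝ, HClose K A B

/-- Two geodesic rays are asymptotic iff their images are Hausdorff close. -/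
def Asymptotic (γ γ' : ℝ → X) : Prop :=
  HausdorffClose (γ '' Set.Ici 0) (γ' '' Set.Ici 0)

def GRay (X : Type*) [MetricSpace X] : Type _ := {γ : ℝ → X // IsGeodesicRay γ}

theorem asymptotic_refl (γ : ℝ → X) : Asymptotic γ γ :=
  ⟨0, fun a ha => ⟨a, ha, by simp⟩, fun b hb => ⟨b, hb, by simp⟩⟩

theorem asymptotic_symm {γ γ' : ℝ → X} (h : Asymptotic γ γ') : Asymptotic γ' γ := by
  obtain ⟨K, h₁, h₂⟩ := h
  refine ⟨K, fun a ha => ?_, fun b hb => ?_⟩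
  · obtain ⟨b, hb, hd⟩ := h₂ a ha
    exact ⟨b, hb, by rwa [dist_comm]⟩
  · obtain ⟨a, ha, hd⟩ := h₁ b hb
    exact ⟨a, ha, by rwa [dist_comm]⟩

theorem asymptotic_trans {γ₁ γ₂ γ₃ : ℝ → X} (h : Asymptotic γ₁ γ₂)
    (h' : Asymptotic γ₂ γ₃) : Asymptotic γ₁ γ₃ := by
  obtain ⟨K, h₁, h₂⟩ := h
  obtain ⟨K', h₁', h₂'⟩ := h'
  refine ⟨K + K', fun a ha => ?_, fun c hc => ?_⟩
  · obtain ⟨b, hb, hab⟩ := h₁ a ha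
    obtain ⟨c, hc, hbc⟩ := h₁' b hb
    exact ⟨c, hc, (dist_triangle a b c).trans (by linarith)⟩
  · obtain ⟨b, hb, hbc⟩ := h₂' c hc
    obtain ⟨a, ha, hab⟩ := h₂ b hb
    exact ⟨a, ha, (dist_triangle a b c).trans (by linarith)⟩

def raySetoid (X : Type*) [MetricSpace X] : Setoid (GRay X) where
  r γ γ' := Asymptotic γ.1 γ'.1
  iseqv := ⟨fun γ => asymptotic_refl γ.1, fun h => asymptotic_symm h,
    fun h h' => asymptotic_trans h h'⟩

/-- The (geodesic) boundary of `X`: asymptoty classes of geodesic rays. -/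
def Boundary (X : Type*) [MetricSpace X] : Type _ := Quotient (raySetoid X)

def Boundary.mk {X : Type*} [MetricSpace X] (γ : GRay X) : Boundary X :=
  Quotient.mk (raySetoid X) γ

/-- A strongly geodesic metric space. -/
def StronglyGeodesic (X : Type*) [MetricSpace X] : Prop :=
  GeodesicSpace X ∧
  (∀ γ : ℝ → X, IsGeodesicRay γ → ∀ y : X,
      ∃ γ' : ℝ → X, IsGeodesicRay γ' ∧ γ' 0 = y ∧ Asymptotic γ γ') ∧
  (∀ γ₁ γ₂ : ℝ → X, IsGeodesicRay γ₁ → IsGeodesicRay γ₂ → γ₁ 0 = γ₂ 0 →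
      ¬ Asymptotic γ₁ γ₂ →
      ∃ γ : ℝ → X, IsBiGeodesic γ ∧
        HausdorffClose (Set.range γ) (γ₁ '' Set.Ici 0 ∪ γ₂ '' Set.Ici 0)) ∧
  (∀ (x : X) (u : ℕ → X),
      (∀ M : ℝ, ∃ N : ℕ, ∀ n, N ≤ n → ∀ m, N ≤ m → M ≤ gromov x (u n) (u m)) →
      ∃ γ : ℝ → X, IsGeodesicRay γ ∧ γ 0 = x ∧
        ∀ M : ℝ, ∃ N : ℕ, ∀ n, N ≤ n → ∀ m, N ≤ m → M ≤ gromov x (γ (n : ℝ)) (u m))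

/-- The sequence `u` converges to the boundary point `p`, with basepoint `x`. -/
def SeqConvTo (x : X) (u : ℕ → X) (p : Boundary X) : Prop :=
  ∃ γ : GRay X, Boundary.mk γ = p ∧
    ∀ M : ℝ, ∃ N : ℕ, ∀ n, N ≤ n → ∀ m, N ≤ m → M ≤ gromov x (u n) (γ.1 (m : ℝ))

/-- `γ` is a geodesic ray in the class of the boundary point `p`. -/
def RayTo (γ : ℝ → X) (p : Boundary X) : Prop :=
  ∃ h : IsGeodesicRay γ, Boundary.mk ⟨γ, h⟩ = p

/-- `γ` is a biinfinite geodesic whose two ends converge to `p` and `q`. -/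
def BiGeodesicJoins (γ : ℝ → X) (p q : Boundary X) : Prop :=
  IsBiGeodesic γ ∧ SeqConvTo (γ 0) (fun n => γ (-(n : ℝ))) p ∧
    SeqConvTo (γ 0) (fun n => γ (n : ℝ)) q

/-- `s` is (the image of) a geodesic joining two points of `X ∪ ∂X`. -/
def JoinSet : X ⊕ Boundary X → X ⊕ Boundary X → Set X → Prop
  | Sum.inl x, Sum.inl y, s => IsGeodesicSegment s x y
  | Sum.inl x, Sum.inr p, s => ∃ γ : ℝ → X, γ 0 = x ∧ RayTo γ p ∧ s = γ '' Set.Ici 0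
  | Sum.inr p, Sum.inl x, s => ∃ γ : ℝ → X, γ 0 = x ∧ RayTo γ p ∧ s = γ '' Set.Ici 0
  | Sum.inr p, Sum.inr q, s => ∃ γ : ℝ → X, BiGeodesicJoins γ p q ∧ s = Set.range γ

/-- The convex hull `Conv(A)` of a subset `A ⊆ X ∪ ∂X`. -/
def geoConv (A : Set (X ⊕ Boundary X)) : Set X :=
  {x | (∃ a : X, A = {Sum.inl a} ∧ x = a) ∨
    ∃ p ∈ A, ∃ q ∈ A, p ≠ q ∧ ∃ s : Set X, JoinSet p q s ∧ x ∈ s}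

/-- The distance between two subsets of `X`. -/
def setDist (A B : Set X) : ℝ := sInf (Set.image2 dist A B)

/-- `a` is a projection of `p` on `A` (relative to `δ`). -/
def IsProjection (δ : ℝ) (A : Set X) (p a : X) : Prop :=
  a ∈ A ∧ ∀ a' ∈ A, dist p a ≤ dist p a' + δ

/-- `f` restricted to `[0,L]` is a unit-speed geodesic from `x` to `y`. -/
def GeodParam (f : ℝ → X) (L : ℝ) (x y : X) : Prop :=
  0 ≤ L ∧ f 0 = x ∧ f L = y ∧
    ∀ u ∈ Set.Icc (0 : ℝ) L, ∀ v ∈ Set.Icc (0 : ℝ) L, dist (f u) (f v) = |u - v|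

/-- Concatenation of three paths, the first on `[0,a]`, the second on `[0,b]`. -/
def concat3 (f₁ f₂ f₃ : ℝ → X) (a b : ℝ) : ℝ → X := fun t =>
  if t ≤ a then f₁ t else if t ≤ a + b then f₂ (t - a) else f₃ (t - a - b)

/-- `f` is a `(lam, ε)`-quasigeodesic on `[a,b]`. -/
def QuasigeodesicOn (lam ε : ℝ) (f : ℝ → X) (a b : ℝ) : Prop :=
  ∀ s ∈ Set.Icc a b, ∀ t ∈ Set.Icc a b, |s - t| ≤ lam * dist (f s) (f t) + ε

/-- The action of `G` on `X` is by isometries. -/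
def IsometricAction (G Y : Type*) [Group G] [MetricSpace Y] [MulAction G Y] : Prop :=
  ∀ (g : G) (x y : Y), dist (g • x) (g • y) = dist x y

section GroupAction

variable {G : Type*} [Group G]

/-- The limit set `Λ(U) ⊆ ∂X` of a subgroup `U ≤ G`. -/
def limitSet (X : Type*) [MetricSpace X] [MulAction G X] (U : Subgroup G) :
    Set (Boundary X) :=
  {p | ∃ x₀ : X, ∃ u : ℕ → U, SeqConvTo x₀ (fun n => ((u n : G)) • x₀) p}

/-- The small displacement set `E(U)` (relative to `δ`). -/
def smallDispSet (X : Type*) [MetricSpace X] [MulAction G X] (δ : ℝ) (U : Subgroup G) :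
    Set X :=
  {x | ∃ u : G, u ∈ U ∧ u ≠ 1 ∧ dist x (u • x) ≤ 100 * δ}

/-- `Z(U) = Conv(Λ(U) ∪ E(U))`. -/
def ZSet (X : Type*) [MetricSpace X] [MulAction G X] (δ : ℝ) (U : Subgroup G) : Set X :=
  geoConv (Sum.inr '' limitSet X U ∪ Sum.inl '' smallDispSet X δ U)

/-- The convex hull `X(U)`: the closure of `Conv(Z(U))`. -/
def cHull (X : Type*) [MetricSpace X] [MulAction G X] (δ : ℝ) (U : Subgroup G) : Set X :=
  closure (geoConv (Sum.inl '' ZSet X δ U))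

/-- The weak convex hull `X_U = Conv(Λ(U))`. -/
def weakHull (X : Type*) [MetricSpace X] [MulAction G X] (U : Subgroup G) : Set X :=
  geoConv (Sum.inr '' limitSet X U)

/-- `l_V(g) = d(X(V), gX(V))`. -/
def lV (X : Type*) [MetricSpace X] [MulAction G X] (δ : ℝ) (V : Subgroup G) (g : G) : ℝ :=
  setDist (cHull X δ V) (g • cHull X δ V)

/-- The translation length of `g`. -/
def translationLength (X : Type*) [MetricSpace X] [MulAction G X] (g : G) : ℝ :=
  sInf (Set.range fun x : X => dist x (g • x))

/-- The asymptotic translation length of `g`. -/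
def asympTranslationLength (X : Type*) [MetricSpace X] [MulAction G X] (g : G) : ℝ :=
  Filter.liminf (fun n : ℕ => translationLength X (g ^ n) / (n : ℝ)) Filter.atTop

/-- An elementary move between `G`-tuples `(U₁,…,U_n; h₁,…,h_m)`. -/
def gMove {n m : ℕ} (M M' : (Fin n → Subgroup G) × (Fin m → G)) : Prop :=
  (M'.2 = M.2 ∧ ∃ (j : Fin n) (g : G),
      g ∈ Subgroup.closure (Set.range M.2 ∪ ⋃ i ∈ {i : Fin n | i ≠ j}, ((M.1 i : Set G))) ∧
      (∀ i, i ≠ j → M'.1 i = M.1 i) ∧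
      M'.1 j = Subgroup.map (MulAut.conj g).toMonoidHom (M.1 j)) ∨
  (M'.1 = M.1 ∧ ∃ (i : Fin m) (g₁ g₂ : G),
      g₁ ∈ Subgroup.closure (M.2 '' {j : Fin m | j ≠ i} ∪ ⋃ t, ((M.1 t : Set G))) ∧
      g₂ ∈ Subgroup.closure (M.2 '' {j : Fin m | j ≠ i} ∪ ⋃ t, ((M.1 t : Set G))) ∧
      (∀ j, j ≠ i → M'.2 j = M.2 j) ∧
      M'.2 i = g₁ * M.2 i * g₂)

/-- Equivalence of `G`-tuples: a finite chain of elementary moves. -/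
def gEquiv {n m : ℕ} :
    (Fin n → Subgroup G) × (Fin m → G) → (Fin n → Subgroup G) × (Fin m → G) → Prop :=
  Relation.ReflTransGen gMove

/-- The family of factors `U₁,…,U_n, F(h₁),…,F(h_m)`. -/
def FF {n : ℕ} (m : ℕ) (U : Fin n → Subgroup G) : Fin n ⊕ Fin m → Type _
  | Sum.inl j => ↥(U j)
  | Sum.inr _ => FreeGroup PUnit

instance ffGroup {n : ℕ} (m : ℕ) (U : Fin n → Subgroup G) :
    (i : Fin n ⊕ Fin m) → Group (FF m U i)
  | Sum.inl j => inferInstanceAs (Group ↥(U j))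
  | Sum.inr _ => inferInstanceAs (Group (FreeGroup PUnit))

def ffHoms {n m : ℕ} (U : Fin n → Subgroup G) (H : Fin m → G) :
    (i : Fin n ⊕ Fin m) → FF m U i →* G
  | Sum.inl j => (U j).subtype
  | Sum.inr j => FreeGroup.lift fun _ => H j

/-- The canonical homomorphism `U₁ ∗ ⋯ ∗ U_n ∗ F(H) → G`. -/
def freeProdHom {n m : ℕ} (U : Fin n → Subgroup G) (H : Fin m → G) :
    Monoid.CoprodI (FF m U) →* G :=
  Monoid.CoprodI.lift (ffHoms U H)

/-- `W = U₁ ∗ ⋯ ∗ U_n ∗ F(H)`: the canonical homomorphism is injective with image `W`. -/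
def IsFreeProdDecomp {n m : ℕ} (U : Fin n → Subgroup G) (H : Fin m → G)
    (W : Subgroup G) : Prop :=
  Function.Injective (freeProdHom U H) ∧ (freeProdHom U H).range = W

/-- Minimality of the `G`-pair `(V; H)` (relative to a `1`-hyperbolic `G`-space `X`). -/
def PairMinimal (X : Type*) [MetricSpace X] [MulAction G X] {m : ℕ}
    (V : Subgroup G) (H : Fin m → G) : Prop :=
  ∀ (V' : Subgroup G) (H' : Fin m → G),
    gEquiv ((fun _ : Fin 1 => V), H) ((fun _ : Fin 1 => V'), H') →
    (∑ i, lV X 1 V (H i)) ≤ (∑ i, lV X 1 V' (H' i)) + 1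

/-- An elementary Nielsen move on tuples of elements of `G`. -/
def NielsenMove {k : ℕ} (g g' : Fin k → G) : Prop :=
  (∃ i : Fin k, (∀ j, j ≠ i → g' j = g j) ∧ g' i = (g i)⁻¹) ∨
  (∃ i j : Fin k, i ≠ j ∧ (∀ t, t ≠ i → g' t = g t) ∧ g' i = g i * g j) ∨
  (∃ i j : Fin k, i ≠ j ∧ g' = g ∘ Equiv.swap i j)

/-- Nielsen equivalence: a finite chain of elementary Nielsen moves. -/
def NielsenEq {k : ℕ} : (Fin k → G) → (Fin k → G) → Prop :=
  Relation.ReflTransGen NielsenMove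

/-- Word length of `g` with respect to the (symmetrized) generating set `S`. -/
def wordLength (S : Set G) (g : G) : ℕ :=
  sInf {n : ℕ | ∃ f : Fin n → G, (∀ i, f i ∈ S ∨ (f i)⁻¹ ∈ S) ∧ (List.ofFn f).prod = g}

/-- `(X, ι)` is a model of the Cayley graph `Γ(G,S)`. -/
def IsCayleyGraph (G : Type*) [Group G] (S : Set G) (X : Type*) [MetricSpace X]
    [MulAction G X] (ι : G → X) : Prop :=
  IsometricAction G X ∧
  (∀ g h : G, ι (g * h) = g • ι h) ∧
  Function.Injective ι ∧
  GeodesicSpace X ∧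
  (∀ g h : G, dist (ι g) (ι h) = (wordLength S (g⁻¹ * h) : ℝ)) ∧
  ∀ x : X, ∃ g h : G, wordLength S (g⁻¹ * h) ≤ 1 ∧
    ∃ s : Set X, IsGeodesicSegment s (ι g) (ι h) ∧ x ∈ s

/-- `H` is a quasiconvex subgroup (with respect to the Cayley graph model `(X, ι)`). -/
def QCSubgroup (X : Type*) [MetricSpace X] (ι : G → X) (H : Subgroup G) : Prop :=
  ∃ ε : ℝ, 0 ≤ ε ∧ Quasiconvex ε (ι '' (H : Set G))

end GroupAction

/-- Every nontrivial element of finite order has finite centralizer. -/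
def AlmostTorsionFree (G : Type*) [Group G] : Prop :=
  ∀ g : G, g ≠ 1 → IsOfFinOrder g → ((Subgroup.centralizer {g} : Subgroup G) : Set G).Finite

/-- `U` is nontrivial and admits no nontrivial free product decomposition. -/
def FreelyIndecomposable (U : Type*) [Group U] : Prop :=
  Nontrivial U ∧
    ¬ ∃ A B : Subgroup U, A ≠ ⊥ ∧ B ≠ ⊥ ∧
        Function.Bijective (Monoid.Coprod.lift A.subtype B.subtype)

def InfiniteCyclic (U : Type*) [Group U] : Prop := Infinite U ∧ IsCyclic U

def VirtuallyCyclic (U : Type*) [Group U] : Prop :=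
  ∃ H : Subgroup U, H.index ≠ 0 ∧ IsCyclic ↥H

def NonElementary (U : Type*) [Group U] : Prop := ¬ Finite U ∧ ¬ VirtuallyCyclic U

end KW

universe u v

namespace KW

open Pointwise Metric Set

section AuxGeom

variable {Y : Type v} [MetricSpace Y]

lemma seg_dist_add {s : Set Y} {a b : Y} (h : IsGeodesicSegment s a b) {q : Y} (hq : q ∈ s) :
    dist a q + dist q b = dist a b := by
  obtain ⟨L, f, hL, h0, hLb, hiso, rfl⟩ := h
  obtain ⟨u, hu, rfl⟩ := hq
  have h1 := hiso 0 ⟨le_refl 0, hL⟩ u hu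
  have h2 := hiso u hu L ⟨hL, le_refl L⟩
  have h3 := hiso 0 ⟨le_refl 0, hL⟩ L ⟨hL, le_refl L⟩
  rw [h0] at h1 h3
  rw [hLb] at h2 h3
  rw [h1, h2, h3]
  rw [abs_of_nonpos (by linarith [hu.1] : (0:ℝ) - u ≤ 0),
    abs_of_nonpos (by linarith [hu.2] : u - L ≤ 0),
    abs_of_nonpos (by linarith : (0:ℝ) - L ≤ 0)]
  ring

lemma exists_param (hX : GeodesicSpace Y) (a b : Y) :
    ∃ (f : ℝ → Y) (L : ℝ), GeodParam f L a b ∧ L = dist a b := by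
  obtain ⟨s, L, f, hL, h0, hLb, hiso, rfl⟩ := hX a b
  refine ⟨f, L, ⟨hL, h0, hLb, hiso⟩, ?_⟩
  have h3 := hiso 0 ⟨le_refl 0, hL⟩ L ⟨hL, le_refl L⟩
  rw [h0, hLb] at h3
  rw [h3, abs_of_nonpos (by linarith : (0:ℝ) - L ≤ 0)]
  ring

lemma param_isSeg {f : ℝ → Y} {L : ℝ} {a b : Y} (h : GeodParam f L a b) :
    IsGeodesicSegment (f '' Set.Icc 0 L) a b :=
  ⟨L, f, h.1, h.2.1, h.2.2.1, h.2.2.2, rfl⟩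

lemma param_dist_zero {f : ℝ → Y} {L : ℝ} {a b : Y} (h : GeodParam f L a b)
    {t : ℝ} (ht : t ∈ Set.Icc 0 L) : dist a (f t) = t := by
  obtain ⟨hL, h0, hLb, hiso⟩ := h
  have := hiso 0 ⟨le_refl 0, hL⟩ t ht
  rw [h0] at this
  rw [this, abs_of_nonpos (by linarith [ht.1] : (0:ℝ) - t ≤ 0)]
  ring

/-- Displacement bound along a geodesic joining two points of small displacement. -/
lemma disp_along {G : Type u} [Group G] [MulAction G Y] {δ' K : ℝ}
    (hδ : 0 ≤ δ') (hK : 0 ≤ K) (hyp : DeltaHyperbolic δ' Y)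
    (act : IsometricAction G Y) (g : G) {x y : Y}
    (hx : dist x (g • x) ≤ K) (hy : dist y (g • y) ≤ K)
    {f : ℝ → Y} {L : ℝ} (hf : GeodParam f L x y) :
    ∀ t ∈ Set.Icc (0:ℝ) L, dist (f t) (g • f t) ≤ 3 * K + 4 * δ' := by
  obtain ⟨s₂, hs₂⟩ := hyp.1 y (g • y)
  obtain ⟨s₃, hs₃⟩ := hyp.1 x (g • y)
  obtain ⟨s₄, hs₄⟩ := hyp.1 x (g • x)
  intro t ht
  have hL := hf.1
  have hdxp : dist x (f t) = t := param_dist_zero hf ht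
  have hs₁ : IsGeodesicSegment (f '' Set.Icc 0 L) x y := param_isSeg hf
  have hsg : IsGeodesicSegment ((fun u => g • f (L - u)) '' Set.Icc 0 L) (g • y) (g • x) := by
    refine ⟨L, _, hL, ?_, ?_, ?_, rfl⟩
    · simp only [sub_zero]; rw [hf.2.2.1]
    · simp only [sub_self]; rw [hf.2.1]
    · intro u hu v hv
      rw [act]
      have := hf.2.2.2 (L - u) ⟨by linarith [hu.2], by linarith [hu.1]⟩
        (L - v) ⟨by linarith [hv.2], by linarith [hv.1]⟩
      rw [this, show (L-u) - (L-v) = -(u - v) by ring, abs_neg]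
  obtain ⟨q, hq, hpq⟩ := hyp.2 x y (g • y) _ s₂ s₃ hs₁ hs₂ hs₃ (f t) ⟨t, ht, rfl⟩
  have hgyp : dist (g • y) (g • f t) = dist y (f t) := act g y (f t)
  rcases hq with hq2 | hq3
  · -- q on the geodesic from y to g•y
    have h1 : dist y q ≤ dist y (g • y) := by
      have := seg_dist_add hs₂ hq2
      have := dist_nonneg (x := q) (y := g • y)
      linarith
    have h2 : dist (f t) y ≤ dist (f t) q + dist q y := dist_triangle _ _ _
    have h3 : dist (f t) (g • f t) ≤ dist (f t) y + dist y (g • y) + dist (g • y) (g • f t) :=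
      dist_triangle4 _ _ _ _
    rw [hgyp, dist_comm y (f t)] at h3
    rw [dist_comm q y] at h2
    linarith
  · -- q on the geodesic from x to g•y; use the second triangle
    obtain ⟨r, hr, hqr⟩ := hyp.2 x (g • y) (g • x) s₃ _ s₄ hs₃ hsg hs₄ q hq3
    have hgxp : dist (g • x) (g • f t) = dist x (f t) := act g x (f t)
    rcases hr with hrg | hr4
    · -- r on the image geodesic
      obtain ⟨u, hu, rfl⟩ := hrg
      set u' := L - u with hu'
      have hu'mem : u' ∈ Set.Icc (0:ℝ) L := ⟨by linarith [hu.2], by linarith [hu.1]⟩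
      have hgxr : dist (g • x) (g • f u') = dist x (f u') := act g x (f u')
      have hxu' : dist x (f u') = u' := param_dist_zero hf hu'mem
      have hpr : dist (f t) (g • f u') ≤ 2 * δ' :=
        (dist_triangle (f t) q (g • f u')).trans (by linarith)
      have hxr1 : dist x (g • f u') ≤ dist x (g • x) + dist (g • x) (g • f u') :=
        dist_triangle _ _ _
      have hxr2 : dist (g • x) (g • f u') ≤ dist (g • x) x + dist x (g • f u') :=
        dist_triangle _ _ _
      have hxr3 : dist x (g • f u') ≤ dist x (f t) + dist (f t) (g • f u') :=
        dist_triangle _ _ _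
      have hxr4 : dist x (f t) ≤ dist x (g • f u') + dist (g • f u') (f t) :=
        dist_triangle _ _ _
      rw [dist_comm (g • x) x] at hxr2
      rw [dist_comm (g • f u') (f t)] at hxr4
      have habs : |u' - t| ≤ K + 2 * δ' := by
        rw [abs_sub_le_iff]
        constructor
        · rw [hgxr, hxu'] at hxr2; linarith
        · rw [hgxr, hxu'] at hxr1; linarith
      have hfin : dist (g • f u') (g • f t) = |u' - t| := by
        rw [act, hf.2.2.2 u' hu'mem t ht]
      have := dist_triangle (f t) (g • f u') (g • f t)
      rw [hfin] at this
      linarith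
    · -- r on the geodesic from x to g•x
      have h1 : dist x r ≤ dist x (g • x) := by
        have := seg_dist_add hs₄ hr4
        have := dist_nonneg (x := r) (y := g • x)
        linarith
      have h2 : dist (f t) x ≤ dist (f t) q + dist q r + dist r x :=
        dist_triangle4 _ _ _ _
      rw [dist_comm r x] at h2
      have h3 : dist (f t) (g • f t) ≤ dist (f t) x + dist x (g • x) + dist (g • x) (g • f t) :=
        dist_triangle4 _ _ _ _
      rw [hgxp, dist_comm x (f t)] at h3
      linarith

end AuxGeom

section AuxGroup

variable {G : Type u} [Group G] [DecidableEq G]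

lemma list_prod_mem_pow (T : Finset G) :
    ∀ (l : List G), (∀ y ∈ l, y ∈ T) → l.prod ∈ T ^ l.length
  | [], _ => by simp [Finset.mem_one]
  | a :: l, h => by
      rw [List.prod_cons, List.length_cons, pow_succ']
      exact Finset.mul_mem_mul (h a (by simp))
        (list_prod_mem_pow T l fun y hy => h y (by simp [hy]))

lemma wordLength_spec {S : Finset G} (hcl : Subgroup.closure (S : Set G) = ⊤) (w : G) :
    ∃ f : Fin (wordLength (S : Set G) w) → G,
      (∀ i, f i ∈ (S : Set G) ∨ (f i)⁻¹ ∈ (S : Set G)) ∧ (List.ofFn f).prod = w := by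
  have hw : w ∈ Subgroup.closure (S : Set G) := by rw [hcl]; trivial
  have hw' : w ∈ Submonoid.closure ((S : Set G) ∪ (S : Set G)⁻¹) := by
    rw [← Subgroup.closure_toSubmonoid]
    exact hw
  obtain ⟨l, hl, hlp⟩ := Submonoid.exists_list_of_mem_closure hw'
  have hne : wordLength (S : Set G) w ∈
      {n : ℕ | ∃ f : Fin n → G,
        (∀ i, f i ∈ (S : Set G) ∨ (f i)⁻¹ ∈ (S : Set G)) ∧ (List.ofFn f).prod = w} := by
    apply Nat.sInf_mem
    refine ⟨l.length, l.get, fun i => ?_, by simp [List.ofFn_get, hlp]⟩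
    rcases hl (l.get i) (l.get_mem ..) with h | h
    · exact Or.inl h
    · exact Or.inr (by simpa using h)
  exact hne

/-- The symmetrized generating set together with the identity. -/
def Tset (S : Finset G) : Finset G := S ∪ S.image (fun z => z⁻¹) ∪ {1}

lemma Tset_card_le {S : Finset G} {n : ℕ} (h : S.card = n) : (Tset S).card ≤ 2 * n + 1 := by
  refine (Finset.card_union_le _ _).trans ?_
  have h1 : (S ∪ S.image (fun z => z⁻¹)).card ≤ 2 * n := by
    refine (Finset.card_union_le _ _).trans ?_
    have := Finset.card_image_le (s := S) (f := fun z : G => z⁻¹)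
    omega
  simp only [Finset.card_singleton]
  omega

lemma wl_mem_pow {S : Finset G} (hcl : Subgroup.closure (S : Set G) = ⊤) (w : G) (m : ℕ)
    (hw : wordLength (S : Set G) w ≤ m) : w ∈ Tset S ^ m := by
  obtain ⟨f, hf, hfp⟩ := wordLength_spec hcl w
  have h1T : (1 : G) ∈ Tset S := by simp [Tset]
  have hl : w ∈ Tset S ^ wordLength (S : Set G) w := by
    have hmem : ∀ y ∈ List.ofFn f, y ∈ Tset S := by
      intro y hy
      obtain ⟨i, rfl⟩ := List.mem_ofFn.mp hy
      rcases hf i with h | h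
      · exact Finset.mem_union_left _ (Finset.mem_union_left _ h)
      · refine Finset.mem_union_left _ (Finset.mem_union_right _ ?_)
        exact Finset.mem_image.mpr ⟨(f i)⁻¹, h, by simp⟩
    have := list_prod_mem_pow (Tset S) (List.ofFn f) hmem
    rwa [List.length_ofFn, hfp] at this
  have hsub : Tset S ^ wordLength (S : Set G) w ⊆ Tset S ^ m := by
    calc Tset S ^ wordLength (S : Set G) w
        ⊆ Tset S ^ wordLength (S : Set G) w * Tset S ^ (m - wordLength (S : Set G) w) :=
          Finset.subset_mul_left _ (Finset.one_mem_pow h1T)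
      _ = Tset S ^ m := by rw [← pow_add, Nat.add_sub_cancel' hw]
  exact hsub hl

end AuxGroup

section AuxCayley

variable {G : Type u} {Y : Type v} [Group G] [DecidableEq G] [MetricSpace Y] [MulAction G Y]
  {S : Finset G} {ι : G → Y}

lemma near_vertex (hC : IsCayleyGraph G (S : Set G) Y ι) (p : Y) :
    ∃ a : G, dist p (ι a) ≤ 1 := by
  obtain ⟨g, h, hw, s, hs, hp⟩ := hC.2.2.2.2.2 p
  refine ⟨g, ?_⟩
  have h1 := seg_dist_add hs hp
  have h2 : dist (ι g) (ι h) = (wordLength (S : Set G) (g⁻¹ * h) : ℝ) := hC.2.2.2.2.1 g h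
  have h3 : (wordLength (S : Set G) (g⁻¹ * h) : ℝ) ≤ 1 := by exact_mod_cast hw
  have h4 := dist_nonneg (x := p) (y := ι h)
  rw [dist_comm]
  linarith

lemma smul_vertex (hC : IsCayleyGraph G (S : Set G) Y ι) (g a : G) :
    g • ι a = ι (g * a) := (hC.2.1 g a).symm

/-- Cardinality bound for a finite subgroup: the quasi-centre argument. -/
lemma finite_subgroup_card_le {δ' : ℝ} (hδ : 0 ≤ δ')
    (hC : IsCayleyGraph G (S : Set G) Y ι) (hcl : Subgroup.closure (S : Set G) = ⊤)
    (hyp : DeltaHyperbolic δ' Y) {Z : Subgroup G} (hZfin : (Z : Set G).Finite)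
    (m : ℕ) (hm : 4 * δ' + 4 ≤ (m : ℝ)) :
    hZfin.toFinset.card ≤ (Tset S ^ m).card := by
  classical
  set Yf : Finset Y := hZfin.toFinset.image ι with hYf
  have h1Z : (1 : G) ∈ hZfin.toFinset := by
    rw [Set.Finite.mem_toFinset]; exact Z.one_mem
  have hYne : Yf.Nonempty := ⟨ι 1, Finset.mem_image.mpr ⟨1, h1Z, rfl⟩⟩
  set ρ : Y → ℝ := fun x => Yf.sup' hYne (fun z => dist x z) with hρ
  have hρ0 : ∀ x, 0 ≤ ρ x := by
    intro x
    obtain ⟨z, hz⟩ := hYne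
    exact le_trans dist_nonneg (Finset.le_sup' _ hz)
  have hbdd : BddBelow (Set.range ρ) := ⟨0, by rintro _ ⟨x, rfl⟩; exact hρ0 x⟩
  set ρ₀ := sInf (Set.range ρ) with hρ₀
  have hrne : (Set.range ρ).Nonempty := ⟨ρ (ι 1), ⟨ι 1, rfl⟩⟩
  obtain ⟨_, ⟨x, rfl⟩, hxρ⟩ := Real.lt_sInf_add_pos hrne one_pos
  -- hxρ : ρ x < ρ₀ + 1
  have hρle : ∀ z ∈ Yf, ∀ w : Y, dist w z ≤ ρ w := fun z hz w => Finset.le_sup' _ hz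
  have hρinv : ∀ h ∈ Z, ρ (h • x) ≤ ρ x := by
    intro h hh
    refine Finset.sup'_le _ _ fun z hz => ?_
    obtain ⟨c, hc, rfl⟩ := Finset.mem_image.mp hz
    have hc' : c ∈ Z := (Set.Finite.mem_toFinset hZfin).mp hc
    have key : dist (h • x) (ι c) = dist x (ι (h⁻¹ * c)) := by
      have : ι c = h • ι (h⁻¹ * c) := by
        rw [smul_vertex hC]
        congr 1
        group
      rw [this, hC.1]
    rw [key]
    refine hρle _ ?_ x
    exact Finset.mem_image.mpr ⟨h⁻¹ * c, (Set.Finite.mem_toFinset hZfin).mpr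
      (mul_mem (inv_mem hh) hc'), rfl⟩
  have key : ∀ h ∈ Z, dist x (h • x) ≤ 4 * δ' + 2 := by
    intro h hh
    obtain ⟨f, L, hf, hLd⟩ := exists_param hyp.1 x (h • x)
    rw [← hLd]
    by_contra hcon
    push_neg at hcon
    have hL : 0 ≤ L := hf.1
    have hmid : L / 2 ∈ Set.Icc (0:ℝ) L := ⟨by linarith, by linarith⟩
    set mid := f (L / 2) with hmiddef
    have hdx : dist x mid = L / 2 := param_dist_zero hf hmid
    have hdhx : dist (h • x) mid = L / 2 := by
      have := hf.2.2.2 (L/2) hmid L ⟨hL, le_refl L⟩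
      rw [hf.2.2.1] at this
      rw [dist_comm, this, abs_of_nonpos (by linarith : L/2 - L ≤ 0)]
      ring
    have claim : ∀ z ∈ Yf, dist mid z ≤ (ρ₀ + 1) - L / 2 + 2 * δ' := by
      intro z hz
      obtain ⟨s₂, hs₂⟩ := hyp.1 (h • x) z
      obtain ⟨s₃, hs₃⟩ := hyp.1 x z
      obtain ⟨q, hq, hmq⟩ := hyp.2 x (h • x) z _ s₂ s₃ (param_isSeg hf) hs₂ hs₃ mid
        ⟨L/2, hmid, rfl⟩
      rcases hq with hq2 | hq3
      · have hsum := seg_dist_add hs₂ hq2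
        have h1 : dist (h • x) q ≥ dist (h • x) mid - dist mid q := by
          have := dist_triangle (h • x) q mid
          rw [dist_comm q mid] at this
          linarith
        have h2 : dist (h • x) z ≤ ρ (h • x) := hρle z hz (h • x)
        have h3 : ρ (h • x) ≤ ρ x := hρinv h hh
        have h4 : dist mid z ≤ dist mid q + dist q z := dist_triangle _ _ _
        rw [hdhx] at h1
        linarith
      · have hsum := seg_dist_add hs₃ hq3
        have h1 : dist x q ≥ dist x mid - dist mid q := by
          have := dist_triangle x q mid
          rw [dist_comm q mid] at this
          linarith
        have h2 : dist x z ≤ ρ x := hρle z hz x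
        have h4 : dist mid z ≤ dist mid q + dist q z := dist_triangle _ _ _
        rw [hdx] at h1
        linarith
    have hρmid : ρ mid ≤ (ρ₀ + 1) - L / 2 + 2 * δ' := Finset.sup'_le _ _ claim
    have hge : ρ₀ ≤ ρ mid := csInf_le hbdd ⟨mid, rfl⟩
    linarith
  obtain ⟨a, ha⟩ := near_vertex hC x
  refine Finset.card_le_card_of_injOn (fun h => a⁻¹ * h * a) ?_ ?_
  · intro h hh
    have hh' : h ∈ Z := (Set.Finite.mem_toFinset hZfin).mp hh
    have hd : dist (ι a) (ι (h * a)) ≤ 4 * δ' + 4 := by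
      have h1 : dist (ι a) (ι (h * a)) ≤ dist (ι a) x + dist x (h • x) + dist (h • x) (ι (h * a)) :=
        dist_triangle4 _ _ _ _
      have h2 : dist (h • x) (ι (h * a)) = dist x (ι a) := by
        rw [← smul_vertex hC h a, hC.1]
      have h3 := key h hh'
      rw [h2, dist_comm (ι a) x] at h1
      linarith
    have hwl : (wordLength (S : Set G) (a⁻¹ * (h * a)) : ℝ) ≤ (m : ℝ) := by
      rw [← hC.2.2.2.2.1 a (h * a)]
      linarith
    have hwl' : wordLength (S : Set G) (a⁻¹ * (h * a)) ≤ m := by exact_mod_cast hwl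
    have := wl_mem_pow hcl (a⁻¹ * (h * a)) m hwl'
    simpa only [mul_assoc, Finset.mem_coe] using this
  · intro h₁ _ h₂ _ he
    simpa using mul_left_cancel (mul_right_cancel he)

end AuxCayley

theorem statement12 (n k δ : ℕ) (hn : 1 ≤ n) (hk : 1 ≤ k) (hδ : 1 ≤ δ) :
    ∃ k₁ : ℝ, ∀ (G : Type u) (X : Type v)
      [Group G] [MetricSpace X] [MulAction G X] (S : Finset G) (ι : G → X),
      S.card = n → Subgroup.closure (S : Set G) = ⊤ →
      IsCayleyGraph G (S : Set G) X ι → DeltaHyperbolic (δ : ℝ) X →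
      AlmostTorsionFree G →
      ∀ g : G, g ≠ 1 → IsOfFinOrder g →
        ∀ x y : X, dist x (g • x) ≤ (k : ℝ) → dist y (g • y) ≤ (k : ℝ) →
          dist x y ≤ k₁ := by
  classical
  set C' : ℕ := 3 * k + 4 * δ + 2 with hC'
  set M : ℕ := (2 * n + 1) ^ C' with hM
  set B : ℕ := (2 * n + 1) ^ (4 * δ + 4) with hB
  set N : ℕ := M * (B + 1) with hN
  refine ⟨((3 * N + 3 : ℕ) : ℝ), ?_⟩
  intro G X _ _ _ S ι hcard hclos hC hyp hatf g hg1 hgord x y hx hy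
  by_contra hcon
  push_neg at hcon
  obtain ⟨f, L, hf, hLd⟩ := exists_param hyp.1 x y
  have hδ0 : (0:ℝ) ≤ (δ:ℝ) := Nat.cast_nonneg δ
  have hk0 : (0:ℝ) ≤ (k:ℝ) := Nat.cast_nonneg k
  have hdisp := disp_along hδ0 hk0 hyp hC.1 g hx hy hf
  have hNL : ((3 * N + 3 : ℕ) : ℝ) < L := by rw [hLd]; exact hcon
  set ts : Fin (N + 1) → ℝ := fun i => 3 * ((i : ℕ) : ℝ) with hts
  have hmem3 : ∀ i : Fin (N + 1), ts i ∈ Set.Icc (0:ℝ) L := by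
    intro i
    constructor
    · positivity
    · have h1 : (i : ℕ) ≤ N := Nat.lt_succ_iff.mp i.isLt
      have h2 : ts i ≤ ((3 * N + 3 : ℕ) : ℝ) := by
        rw [hts]
        push_cast
        have : ((i:ℕ) : ℝ) ≤ (N : ℝ) := by exact_mod_cast h1
        linarith
      linarith
  have hvert : ∀ i : Fin (N + 1), ∃ a : G, dist (f (ts i)) (ι a) ≤ 1 :=
    fun i => near_vertex hC _
  choose hv hvs using hvert
  set w : Fin (N + 1) → G := fun i => (hv i)⁻¹ * g * hv i with hw
  have hwmem : ∀ i ∈ (Finset.univ : Finset (Fin (N+1))), w i ∈ Tset S ^ C' := by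
    intro i _
    have hpt := hdisp (ts i) (hmem3 i)
    have hsm : g • ι (hv i) = ι (g * hv i) := smul_vertex hC g (hv i)
    have hd4 : dist (ι (hv i)) (ι (g * hv i)) ≤ (C' : ℝ) := by
      have t1 : dist (ι (hv i)) (ι (g * hv i)) ≤
          dist (ι (hv i)) (f (ts i)) + dist (f (ts i)) (g • f (ts i))
            + dist (g • f (ts i)) (ι (g * hv i)) := dist_triangle4 _ _ _ _
      have t2 : dist (g • f (ts i)) (ι (g * hv i)) = dist (f (ts i)) (ι (hv i)) := by
        rw [← hsm, hC.1]
      rw [t2, dist_comm (ι (hv i)) (f _)] at t1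
      have t3 := hvs i
      rw [hC']
      push_cast
      linarith
    have hwl : wordLength (S : Set G) ((hv i)⁻¹ * (g * hv i)) ≤ C' := by
      have heq := hC.2.2.2.2.1 (hv i) (g * hv i)
      rw [heq] at hd4
      exact_mod_cast hd4
    have := wl_mem_pow hclos _ C' hwl
    simpa [hw, mul_assoc] using this
  have hTcard : (Tset S ^ C').card ≤ M := by
    calc (Tset S ^ C').card ≤ (Tset S).card ^ C' := Finset.card_pow_le
    _ ≤ (2*n+1) ^ C' := Nat.pow_le_pow_left (Tset_card_le hcard) _
  have hlt : (Tset S ^ C').card * B < (Finset.univ : Finset (Fin (N+1))).card := by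
    rw [Finset.card_univ, Fintype.card_fin]
    have hM1 : 1 ≤ M := Nat.one_le_pow _ _ (by omega)
    have : (Tset S ^ C').card * B ≤ M * B := Nat.mul_le_mul_right _ hTcard
    have : M * B < M * (B + 1) + 1 := by nlinarith
    omega
  obtain ⟨b, _, hfib⟩ := Finset.exists_lt_card_fiber_of_mul_lt_card_of_maps_to hwmem hlt
  set F : Finset (Fin (N+1)) :=
    {x ∈ (Finset.univ : Finset (Fin (N+1))) | w x = b} with hF
  have hB1 : 1 ≤ B := Nat.one_le_pow _ _ (by omega)
  have hFne : F.Nonempty := Finset.card_pos.mp (by omega)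
  obtain ⟨i₀, hi₀⟩ := hFne
  have hZfin := hatf g hg1 hgord
  set ψ : Fin (N+1) → G := fun i => hv i * (hv i₀)⁻¹ with hψ
  have hwF : ∀ i ∈ F, w i = b := by
    intro i hi
    exact (Finset.mem_filter.mp hi).2
  have hmaps : ∀ i ∈ F, ψ i ∈ hZfin.toFinset := by
    intro i hi
    rw [Set.Finite.mem_toFinset]
    have he : (hv i)⁻¹ * g * hv i = (hv i₀)⁻¹ * g * hv i₀ := by
      rw [show (hv i)⁻¹ * g * hv i = w i from rfl, hwF i hi, ← hwF i₀ hi₀]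
    show ψ i ∈ Subgroup.centralizer {g}
    rw [Subgroup.mem_centralizer_iff]
    intro c hc
    rw [Set.mem_singleton_iff] at hc
    rw [hc]
    calc g * ψ i = hv i * ((hv i)⁻¹ * g * hv i) * (hv i₀)⁻¹ := by rw [hψ]; group
    _ = hv i * ((hv i₀)⁻¹ * g * hv i₀) * (hv i₀)⁻¹ := by rw [he]
    _ = ψ i * g := by rw [hψ]; group
  have hinj : Set.InjOn ψ F := by
    intro i hi j hj he
    have hveq : hv i = hv j := mul_right_cancel he
    by_contra hne
    have hne' : (i : ℕ) ≠ (j : ℕ) := fun hij => hne (Fin.ext hij)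
    have hdist : dist (f (ts i)) (f (ts j)) = |ts i - ts j| :=
      hf.2.2.2 _ (hmem3 i) _ (hmem3 j)
    have h2 : dist (f (ts i)) (f (ts j)) ≤ 2 := by
      have t := dist_triangle (f (ts i)) (ι (hv i)) (f (ts j))
      have t2 : dist (ι (hv i)) (f (ts j)) ≤ 1 := by
        rw [hveq, dist_comm]; exact hvs j
      linarith [hvs i]
    have h3 : (3:ℝ) ≤ |ts i - ts j| := by
      have heq3 : ts i - ts j = 3 * (((i:ℕ):ℝ) - ((j:ℕ):ℝ)) := by rw [hts]; ring
      rw [heq3, abs_mul, abs_of_nonneg (by norm_num : (0:ℝ) ≤ 3)]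
      have h1le : (1:ℝ) ≤ |((i:ℕ):ℝ) - ((j:ℕ):ℝ)| := by
        rcases hne'.lt_or_gt with hlt | hlt
        · have : (i:ℕ) + 1 ≤ (j:ℕ) := hlt
          have hc : ((i:ℕ):ℝ) + 1 ≤ ((j:ℕ):ℝ) := by exact_mod_cast this
          rw [abs_sub_comm, abs_of_nonneg (by linarith)]
          linarith
        · have : (j:ℕ) + 1 ≤ (i:ℕ) := hlt
          have hc : ((j:ℕ):ℝ) + 1 ≤ ((i:ℕ):ℝ) := by exact_mod_cast this
          rw [abs_of_nonneg (by linarith)]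
          linarith
      linarith
    rw [hdist] at h2
    linarith
  have hcard2 : F.card ≤ hZfin.toFinset.card :=
    Finset.card_le_card_of_injOn ψ hmaps hinj
  have hZB : hZfin.toFinset.card ≤ B := by
    have h1 := finite_subgroup_card_le hδ0 hC hclos hyp hZfin (4 * δ + 4)
      (by push_cast; linarith)
    have h2 : (Tset S ^ (4 * δ + 4)).card ≤ B := by
      calc (Tset S ^ (4*δ+4)).card ≤ (Tset S).card ^ (4*δ+4) := Finset.card_pow_le
      _ ≤ (2*n+1) ^ (4*δ+4) := Nat.pow_le_pow_left (Tset_card_le hcard) _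
    exact h1.trans h2
  omega

end KW
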